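/- The cycle matroid of K_n (the count matroid M_{f_{1,1}}(K_n), where f_{1,1}(F) = |V(F)| − 1) is the unique maximal matroid on E(K_n) in which every triangle is a circuit, and its rank function is val_{K₃}. -/

import Mathlib

open Set

variable {α : Type*}

/-- `C` is a circuit of `M`: a minimal dependent subset of the ground set. -/
def Matroid.IsCircuit' (M : Matroid α) (C : Set α) : Prop :=
  C ⊆ M.E ∧ ¬ M.Indep C ∧ ∀ e ∈ C, M.Indep (C \ {e})

/-- `M` is an `X`-matroid on `E`: a matroid with ground set `E` in which every member of the
family `X` is a circuit. -/
def IsXMatroid (E : Set α) (X : Set (Set α)) (M : Matroid α) : Prop :=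
  M.E = E ∧ ∀ C ∈ X, M.IsCircuit' C

/-- The union of a list of sets. -/
def unionList (S : List (Set α)) : Set α := ⋃ Y ∈ S, Y

/-- A proper `X`-sequence: a list of members of `X` such that no term is contained in the
union of the preceding terms. -/
def ProperSeq (X : Set (Set α)) (S : List (Set α)) : Prop :=
  (∀ Y ∈ S, Y ∈ X) ∧
  ∀ i : Fin S.length, 0 < i.1 → ¬ (S.get i ⊆ unionList (S.take i.1))

/-- `val(F, S) = |F ∪ ⋃ S| - |S|`. -/
noncomputable def valSeq (F : Set α) (S : List (Set α)) : ℤ :=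
  ((F ∪ unionList S).ncard : ℤ) - S.length

/-- `val_X(F)`: the minimum of `val(F, S)` over all proper `X`-sequences `S`. -/
noncomputable def valX (X : Set (Set α)) (F : Set α) : ℤ :=
  sInf {v : ℤ | ∃ S : List (Set α), ProperSeq X S ∧ v = valSeq F S}

/-- The rank of a set `F` in a matroid `M`: the largest size of an independent subset of `F`. -/
noncomputable def mrk (M : Matroid α) (F : Set α) : ℕ :=
  sSup {n : ℕ | ∃ I ⊆ F, M.Indep I ∧ I.ncard = n}

/-- The weak order on matroids: `M ⪯ N` iff every independent set of `M` is independent in `N`. -/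
def WeakLE (M N : Matroid α) : Prop := ∀ I : Set α, M.Indep I → N.Indep I

/-- The set of vertices incident to a set of edges. -/
def verts {V : Type*} (F : Set (Sym2 V)) : Set V := {v | ∃ e ∈ F, v ∈ e}

/-- The edge sets of matchings with exactly `k` edges in the complete graph `K_n`. -/
def matchingCopies (n k : ℕ) : Set (Set (Sym2 (Fin n))) :=
  {F | F ⊆ (⊤ : SimpleGraph (Fin n)).edgeSet ∧ F.ncard = k ∧
       ∀ e ∈ F, ∀ f ∈ F, e ≠ f → ∀ v : Fin n, v ∈ e → v ∉ f}
/-- The edge sets of triangles in `K_n`. -/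
def triangleCopies (n : ℕ) : Set (Set (Sym2 (Fin n))) :=
  {F | ∃ x y z : Fin n, x ≠ y ∧ x ≠ z ∧ y ≠ z ∧ F = {s(x, y), s(x, z), s(y, z)}}

section K3Aux

open Relation

/-! ### Generic list/union lemmas -/

lemma mem_unionList {S : List (Set α)} {x : α} : x ∈ unionList S ↔ ∃ Y ∈ S, x ∈ Y := by
  simp [unionList]

lemma unionList_append (S T : List (Set α)) :
    unionList (S ++ T) = unionList S ∪ unionList T := by
  ext x; simp [mem_unionList, List.mem_append, or_and_right, exists_or, Set.mem_union]

/-! ### Matroid exchange and the circuit sequence lemma -/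

lemma exch_lemma {M : Matroid α} {I K : Set α} {e : α}
    (hI : M.Indep I) (heI : e ∈ I) (hK : M.Indep K) (heK : e ∉ K)
    (hdep : ¬ M.Indep (insert e K)) (hfin : (K ∪ (I \ {e})).Finite)
    (heE : e ∈ M.E) :
    ∃ I', M.Indep I' ∧ I' ⊆ K ∪ (I \ {e}) ∧ I.ncard ≤ I'.ncard := by
  obtain ⟨J, hJ, hsub⟩ := (hI.sdiff {e}).subset_isBasis'_of_subset Set.subset_union_right
  refine ⟨J, hJ.indep, hJ.subset, ?_⟩
  by_contra hlt
  push_neg at hlt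
  have hIe : I \ {e} = J := by
    refine Set.eq_of_subset_of_ncard_le hsub ?_ (hfin.subset hJ.subset)
    have hIfin : I.Finite := by
      have : I ⊆ insert e (K ∪ (I \ {e})) := by
        intro x hx
        rcases eq_or_ne x e with rfl | hne
        · exact Set.mem_insert _ _
        · exact Set.mem_insert_of_mem _ (Set.mem_union_right _ ⟨hx, hne⟩)
      exact (hfin.insert e).subset this
    have h1 : I.ncard = (I \ {e}).ncard + 1 := by
      rw [Set.ncard_diff_singleton_add_one heI hIfin]
    omega
  have hecl : e ∈ M.closure K := by
    rw [hK.insert_indep_iff_of_notMem heK] at hdep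
    simp only [Set.mem_diff, not_and, not_not] at hdep
    exact hdep heE
  have h2 : e ∈ M.closure (I \ {e}) := by
    rw [hIe, hJ.closure_eq_closure]
    exact M.closure_subset_closure Set.subset_union_left hecl
  exact hI.notMem_closure_diff_of_mem heI h2

/-- The key circuit-sequence rank bound: if `I` is independent, `I ⊆ F`, and `S` is a proper
sequence of circuits, then `|I| + |S| ≤ |F ∪ ⋃ S|`. -/
lemma rank_seq_lemma {M : Matroid α} (S : List (Set α))
    (hC : ∀ C ∈ S, M.IsCircuit' C)
    (hproper : ∀ i : Fin S.length, 0 < i.1 → ¬ (S.get i ⊆ unionList (S.take i.1)))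
    {F I : Set α} (hFE : F ⊆ M.E) (hfin : (F ∪ unionList S).Finite)
    (hI : M.Indep I) (hIF : I ⊆ F) :
    I.ncard + S.length ≤ (F ∪ unionList S).ncard := by
  induction S using List.reverseRecOn generalizing F I with
  | nil =>
    have h1 : unionList ([] : List (Set α)) = ∅ := by simp [unionList]
    rw [h1] at hfin ⊢
    simpa using Set.ncard_le_ncard (hIF.trans Set.subset_union_left) hfin
  | append_singleton S' C ih =>
    have hCc : M.IsCircuit' C := hC C (by simp)
    have hC' : ∀ C' ∈ S', M.IsCircuit' C' := fun C' h => hC C' (by simp [h])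
    have hCE : C ⊆ M.E := hCc.1
    have hdepC : ¬ M.Indep C := hCc.2.1
    -- pick a fresh element of C
    have hfresh : ∃ e ∈ C, e ∉ unionList S' := by
      rcases Nat.eq_zero_or_pos S'.length with h0 | h0
      · have hS' : S' = [] := List.length_eq_zero_iff.mp h0
        have hCne : C.Nonempty := by
          rcases C.eq_empty_or_nonempty with rfl | h
          · exact absurd M.empty_indep hdepC
          · exact h
        obtain ⟨e, he⟩ := hCne
        exact ⟨e, he, by simp [hS', unionList]⟩
      · have hi : S'.length < (S' ++ [C]).length := by simp
        have := hproper ⟨S'.length, hi⟩ h0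
        have hget : (S' ++ [C]).get ⟨S'.length, hi⟩ = C := by
          simp [List.getElem_concat_length]
        have htake : (S' ++ [C]).take S'.length = S' := List.take_left
        rw [hget, htake] at this
        exact Set.not_subset.mp this
    obtain ⟨e, heC, heS'⟩ := hfresh
    have hul : unionList (S' ++ [C]) = unionList S' ∪ C := by
      rw [unionList_append]; simp [unionList]
    set X := F ∪ unionList (S' ++ [C]) with hX
    have hXeq : X = F ∪ (unionList S' ∪ C) := by rw [hX, hul]
    have heX : e ∈ X := by rw [hXeq]; exact Or.inr (Or.inr heC)
    have hXfin : X.Finite := hfin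
    -- the new ambient set
    have hF''E : (F ∪ C) \ {e} ⊆ M.E := fun x hx =>
      hx.1.elim (fun h => hFE h) (fun h => hCE h)
    have hsplit : ((F ∪ C) \ {e}) ∪ unionList S' = X \ {e} := by
      rw [hXeq]
      ext x
      constructor
      · rintro (⟨hx, hne⟩ | hx)
        · exact ⟨hx.elim (fun h => Or.inl h) (fun h => Or.inr (Or.inr h)), hne⟩
        · exact ⟨Or.inr (Or.inl hx), fun h => heS' (h ▸ hx)⟩
      · rintro ⟨hx | hx | hx, hne⟩
        · exact Or.inl ⟨Or.inl hx, hne⟩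
        · exact Or.inr hx
        · exact Or.inl ⟨Or.inr hx, hne⟩
    -- find a suitable independent set avoiding e
    have hKindep : M.Indep (C \ {e}) := hCc.2.2 e heC
    have hmain : ∃ I', M.Indep I' ∧ I' ⊆ (F ∪ C) \ {e} ∧ I.ncard ≤ I'.ncard := by
      by_cases heI : e ∈ I
      · have hins : insert e (C \ {e}) = C := by
          rw [Set.insert_diff_singleton, Set.insert_eq_of_mem heC]
        obtain ⟨I', h1, h2, h3⟩ := exch_lemma hI heI hKindep (by simp)
          (by rw [hins]; exact hdepC)
          (by
            refine hXfin.subset ?_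
            rintro x (⟨hx, _⟩ | ⟨hx, _⟩)
            · rw [hXeq]; exact Or.inr (Or.inr hx)
            · exact Or.inl (hIF hx))
          (hCE heC)
        refine ⟨I', h1, ?_, h3⟩
        intro x hx
        rcases h2 hx with ⟨hx1, hx2⟩ | ⟨hx1, hx2⟩
        · exact ⟨Or.inr hx1, hx2⟩
        · exact ⟨Or.inl (hIF hx1), hx2⟩
      · exact ⟨I, hI, fun x hx => ⟨Or.inl (hIF hx), fun h => heI (h ▸ hx)⟩, le_refl _⟩
    obtain ⟨I', hI', hI'sub, hcard⟩ := hmain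
    -- properness for the shorter list
    have hproper' : ∀ i : Fin S'.length, 0 < i.1 →
        ¬ (S'.get i ⊆ unionList (S'.take i.1)) := by
      intro i hi
      have hilt : i.1 < (S' ++ [C]).length := by
        simp only [List.length_append, List.length_singleton]
        omega
      have := hproper ⟨i.1, hilt⟩ hi
      have hget : (S' ++ [C]).get ⟨i.1, hilt⟩ = S'.get i := by
        simp [List.getElem_append_left i.2]
      have htake : (S' ++ [C]).take i.1 = S'.take i.1 :=
        List.take_append_of_le_length (le_of_lt i.2)
      rwa [hget, htake] at this
    have hfin' : (((F ∪ C) \ {e}) ∪ unionList S').Finite := by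
      rw [hsplit]; exact hXfin.subset Set.diff_subset
    have IH := ih hC' hproper' hF''E hfin' hI' hI'sub
    rw [hsplit] at IH
    have hXcard : X.ncard = (X \ {e}).ncard + 1 := by
      rw [Set.ncard_diff_singleton_add_one heX hXfin]
    have hlen : (S' ++ [C]).length = S'.length + 1 := by simp
    omega

end K3Aux

section K3Graph

variable {n : ℕ}

/-- Reachability along a set of edges. -/
def reach (F : Set (Sym2 (Fin n))) : Fin n → Fin n → Prop :=
  Relation.ReflTransGen (fun x y => s(x, y) ∈ F)

lemma reach_symm {F : Set (Sym2 (Fin n))} {x y : Fin n} (h : reach F x y) : reach F y x :=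
  by
  induction h with
  | refl => exact Relation.ReflTransGen.refl
  | tail _ hab ih => exact Relation.ReflTransGen.head (by rwa [Sym2.eq_swap] at hab) ih

lemma reach_mono {F G : Set (Sym2 (Fin n))} (hFG : F ⊆ G) {x y : Fin n} (h : reach F x y) :
    reach G x y :=
  Relation.ReflTransGen.mono (fun a b hab => hFG hab) _ _ h

lemma reach_single {F : Set (Sym2 (Fin n))} {a b : Fin n} (h : s(a, b) ∈ F) : reach F a b :=
  Relation.ReflTransGen.single h

lemma mem_verts_left {F : Set (Sym2 (Fin n))} {a b : Fin n} (h : s(a, b) ∈ F) : a ∈ verts F :=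
  ⟨_, h, by simp⟩

lemma mem_verts_right {F : Set (Sym2 (Fin n))} {a b : Fin n} (h : s(a, b) ∈ F) : b ∈ verts F :=
  ⟨_, h, by simp⟩

lemma reach_closed {F : Set (Sym2 (Fin n))} {A : Set (Fin n)}
    (hA : ∀ a ∈ A, ∀ b, s(a, b) ∈ F → b ∈ A) {x y : Fin n} (h : reach F x y) (hx : x ∈ A) :
    y ∈ A := by
  induction h with
  | refl => exact hx
  | tail _ h₂ ih => exact hA _ ih _ h₂

lemma mem_verts_of_reach {F : Set (Sym2 (Fin n))} {x y : Fin n} (h : reach F x y) (hxy : x ≠ y) :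
    y ∈ verts F := by
  rcases h.cases_tail with h' | ⟨c, _, hstep⟩
  · exact absurd h'.symm hxy
  · exact mem_verts_right hstep

/-- The connected component of a vertex. -/
def comp (F : Set (Sym2 (Fin n))) (v : Fin n) : Set (Fin n) := {w | reach F v w}

lemma self_mem_comp {F : Set (Sym2 (Fin n))} (v : Fin n) : v ∈ comp F v :=
  Relation.ReflTransGen.refl

lemma comp_eq_of_reach {F : Set (Sym2 (Fin n))} {v w : Fin n} (h : reach F v w) :
    comp F v = comp F w := by
  ext x; exact ⟨fun hx => (reach_symm h).trans hx, fun hx => h.trans hx⟩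

/-- Number of connected components (components of isolated vertices don't occur since we
only range over `verts F`). -/
noncomputable def ncomps (F : Set (Sym2 (Fin n))) : ℕ := ((fun v => comp F v) '' verts F).ncard

/-- A choice of root in each component. -/
noncomputable def root (F : Set (Sym2 (Fin n))) (v : Fin n) : Fin n :=
  @Classical.epsilon _ ⟨v⟩ (fun w => reach F v w)

lemma reach_root (F : Set (Sym2 (Fin n))) (v : Fin n) : reach F v (root F v) :=
  Classical.epsilon_spec_aux ⟨v⟩ _ (⟨v, Relation.ReflTransGen.refl⟩ : ∃ w, reach F v w)

lemma root_eq_of_reach {F : Set (Sym2 (Fin n))} {v w : Fin n} (h : reach F v w) :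
    root F v = root F w := by
  have hp : (fun x => reach F v x) = (fun x => reach F w x) := by
    funext x
    exact propext ⟨fun hx => (reach_symm h).trans hx, fun hx => h.trans hx⟩
  unfold root
  rw [hp]

lemma root_root (F : Set (Sym2 (Fin n))) (v : Fin n) : root F (root F v) = root F v :=
  (root_eq_of_reach (reach_root F v)).symm

/-- The "component clique closure" of an edge set. -/
def clF (F : Set (Sym2 (Fin n))) : Set (Sym2 (Fin n)) :=
  {e | ∃ a b : Fin n, e = s(a, b) ∧ a ≠ b ∧ a ∈ verts F ∧ reach F a b}

/-- The triangle associated to a non-root edge. -/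
def tri (F : Set (Sym2 (Fin n))) (e : Sym2 (Fin n)) : Set (Sym2 (Fin n)) :=
  {f | ∃ a b : Fin n, e = s(a, b) ∧
    (f = s(root F a, a) ∨ f = s(root F a, b) ∨ f = s(a, b))}


lemma sym2_rep {V : Type*} (e : Sym2 V) : ∃ a b : V, e = s(a, b) :=
  @Sym2.ind V (fun e => ∃ a b : V, e = s(a, b)) (fun a b => ⟨a, b, rfl⟩) e

lemma verts_closed {F : Set (Sym2 (Fin n))} {a b : Fin n} (ha : a ∈ verts F)
    (hr : reach F a b) : b ∈ verts F := by
  rcases eq_or_ne a b with rfl | hne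
  · exact ha
  · exact mem_verts_of_reach hr hne

lemma clF_spec {F : Set (Sym2 (Fin n))} {e : Sym2 (Fin n)} {a b : Fin n}
    (he : e ∈ clF F) (hab : e = s(a, b)) :
    a ≠ b ∧ a ∈ verts F ∧ b ∈ verts F ∧ reach F a b := by
  obtain ⟨a', b', he', hne, hv, hr⟩ := he
  rw [hab, Sym2.eq_iff] at he'
  rcases he' with ⟨rfl, rfl⟩ | ⟨rfl, rfl⟩
  · exact ⟨hne, hv, verts_closed hv hr, hr⟩
  · exact ⟨hne.symm, verts_closed hv hr, hv, reach_symm hr⟩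

lemma subset_clF {F : Set (Sym2 (Fin n))} (hF : F ⊆ (⊤ : SimpleGraph (Fin n)).edgeSet) :
    F ⊆ clF F := by
  intro e he
  obtain ⟨a, b, rfl⟩ := sym2_rep e
  have hne : a ≠ b := by
    have := SimpleGraph.not_isDiag_of_mem_edgeSet _ (hF he)
    simpa [Sym2.mk_isDiag_iff] using this
  exact ⟨a, b, rfl, hne, mem_verts_left he, reach_single he⟩

lemma clF_subset_edgeSet {F : Set (Sym2 (Fin n))} :
    clF F ⊆ (⊤ : SimpleGraph (Fin n)).edgeSet := by
  rintro e ⟨a, b, rfl, hne, -, -⟩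
  simpa using hne

/-- Main construction: a proper triangle sequence witnessing `val ≤ |V(F)| - c(F)`. -/
lemma exists_good_seq {F : Set (Sym2 (Fin n))}
    (hF : F ⊆ (⊤ : SimpleGraph (Fin n)).edgeSet) :
    ∃ S : List (Set (Sym2 (Fin n))), ProperSeq (triangleCopies n) S ∧
      valSeq F S = ((verts F).ncard : ℤ) - ncomps F := by
  classical
  set T : Set (Sym2 (Fin n)) := {e ∈ clF F | ∀ v ∈ e, root F v ≠ v} with hT
  have hTcl : T ⊆ clF F := fun e he => he.1
  -- the canonical description of `tri F e`
  have htri_eq : ∀ {e : Sym2 (Fin n)} {a b : Fin n}, e ∈ clF F → e = s(a, b) →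
      tri F e = {s(root F a, a), s(root F a, b), s(a, b)} := by
    intro e a b hecl heab
    have hspec := clF_spec hecl heab
    have hroot : root F a = root F b := root_eq_of_reach hspec.2.2.2
    ext f
    constructor
    · rintro ⟨a', b', he', hopt⟩
      rw [heab, Sym2.eq_iff] at he'
      rcases he' with ⟨rfl, rfl⟩ | ⟨rfl, rfl⟩
      · exact hopt
      · rcases hopt with rfl | rfl | rfl
        · rw [← hroot]; right; left; rfl
        · rw [← hroot]; left; rfl
        · right; right; exact Sym2.eq_swap
    · rintro (rfl | rfl | rfl)
      · exact ⟨a, b, heab, Or.inl rfl⟩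
      · exact ⟨a, b, heab, Or.inr (Or.inl rfl)⟩
      · exact ⟨a, b, heab, Or.inr (Or.inr rfl)⟩
  -- triangles are genuine triangles
  have htri_copy : ∀ e ∈ T, tri F e ∈ triangleCopies n := by
    intro e he
    obtain ⟨a, b, heab⟩ := sym2_rep e
    have hspec := clF_spec he.1 heab
    have hna : root F a ≠ a := he.2 a (by rw [heab]; simp)
    have hnb : root F b ≠ b := he.2 b (by rw [heab]; simp)
    have hroot : root F a = root F b := root_eq_of_reach hspec.2.2.2
    refine ⟨root F a, a, b, hna, ?_, hspec.1, htri_eq he.1 heab⟩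
    rw [hroot]; exact hnb
  -- triangles lie inside the clique closure
  have htri_sub : ∀ e ∈ T, tri F e ⊆ clF F := by
    intro e he f hf
    obtain ⟨a, b, heab, hopt⟩ := hf
    have hspec := clF_spec he.1 heab
    have hna : root F a ≠ a := he.2 a (by rw [heab]; simp)
    have hnb : root F b ≠ b := he.2 b (by rw [heab]; simp)
    have hroot : root F a = root F b := root_eq_of_reach hspec.2.2.2
    rcases hopt with rfl | rfl | rfl
    · exact ⟨a, root F a, Sym2.eq_swap, hna.symm, hspec.2.1, reach_root F a⟩
    · refine ⟨b, root F a, Sym2.eq_swap, ?_, hspec.2.2.1, ?_⟩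
      · intro h; exact hnb (by rw [← hroot]; exact h.symm)
      · rw [hroot]; exact reach_root F b
    · exact heab ▸ he.1
  -- the list of triangles
  set l : List (Sym2 (Fin n)) := (Set.toFinite T).toFinset.toList with hl
  have hlnd : l.Nodup := Finset.nodup_toList _
  have hlmem : ∀ e, e ∈ l ↔ e ∈ T := by
    intro e; rw [hl, Finset.mem_toList, Set.Finite.mem_toFinset]
  set S : List (Set (Sym2 (Fin n))) := l.map (tri F) with hS
  have hSlen : S.length = l.length := by simp [hS]
  have hUS : ∀ x, x ∈ unionList S ↔ ∃ e ∈ T, x ∈ tri F e := by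
    intro x
    rw [mem_unionList]
    constructor
    · rintro ⟨Y, hY, hx⟩
      obtain ⟨e, hel, rfl⟩ := List.mem_map.mp hY
      exact ⟨e, (hlmem e).mp hel, hx⟩
    · rintro ⟨e, heT, hx⟩
      exact ⟨tri F e, List.mem_map.mpr ⟨e, (hlmem e).mpr heT, rfl⟩, hx⟩
  have hpriv : ∀ e ∈ T, ∀ e' ∈ T, e ∈ tri F e' → e = e' := by
    intro e heT e' he'T hmem
    obtain ⟨a, b, heab⟩ := sym2_rep e'
    rw [htri_eq he'T.1 heab] at hmem
    rcases hmem with rfl | rfl | rfl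
    · exact absurd (root_root F a) (heT.2 (root F a) (by simp))
    · exact absurd (root_root F a) (heT.2 (root F a) (by simp))
    · exact heab.symm
  have hcover : F ∪ unionList S = clF F := by
    apply Set.Subset.antisymm
    · rintro x (hx | hx)
      · exact subset_clF hF hx
      · obtain ⟨e, heT, hxe⟩ := (hUS x).mp hx
        exact htri_sub e heT hxe
    · have key : ∀ a b : Fin n, a ≠ b → a ∈ verts F → b ∈ verts F → reach F a b →
          root F a = a → root F b ≠ b → s(a, b) ∈ F ∪ unionList S := by
        intro a b hne hav hbv hr hra hrb
        have hrootba : root F b = a := by rw [← root_eq_of_reach hr, hra]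
        by_cases hd : ∃ d, reach F b d ∧ d ≠ b ∧ d ≠ a
        · obtain ⟨d, hrd, hdb, hda⟩ := hd
          have hdT : s(b, d) ∈ T := by
            refine ⟨⟨b, d, rfl, hdb.symm, hbv, hrd⟩, ?_⟩
            intro v hv
            rw [Sym2.mem_iff] at hv
            rcases hv with rfl | rfl
            · rw [hrootba]; exact hne
            · rw [← root_eq_of_reach hrd, hrootba]; exact fun h => hda h.symm
          refine Or.inr ((hUS _).mpr ⟨s(b, d), hdT, ⟨b, d, rfl, Or.inl ?_⟩⟩)
          rw [hrootba]
        · push_neg at hd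
          obtain ⟨f, hfF, hbf⟩ := hbv
          have hfc : s(b, Sym2.Mem.other hbf) = f := Sym2.other_spec hbf
          have hcb : Sym2.Mem.other hbf ≠ b := by
            intro h
            have hdiag := SimpleGraph.not_isDiag_of_mem_edgeSet _ (hF hfF)
            rw [← hfc, h] at hdiag
            exact hdiag (Sym2.mk_isDiag_iff.mpr rfl)
          have hrc : reach F b (Sym2.Mem.other hbf) := reach_single (by rw [hfc]; exact hfF)
          have hca := hd _ hrc hcb
          refine Or.inl ?_
          have : s(a, b) = f := by rw [← hfc, ← hca, Sym2.eq_swap]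
          rw [this]; exact hfF
      rintro x hx
      obtain ⟨a, b, rfl, hne, hav, hr⟩ := hx
      have hbv : b ∈ verts F := verts_closed hav hr
      have hroot : root F a = root F b := root_eq_of_reach hr
      by_cases hra : root F a = a
      · by_cases hrb : root F b = b
        · exact absurd (by rw [← hra, hroot, hrb]) hne
        · exact key a b hne hav hbv hr hra hrb
      · by_cases hrb : root F b = b
        · have := key b a (Ne.symm hne) hbv hav (reach_symm hr) hrb hra
          rw [Sym2.eq_swap]; exact this
        · have heT : s(a, b) ∈ T := by
            refine ⟨⟨a, b, rfl, hne, hav, hr⟩, ?_⟩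
            intro v hv
            rw [Sym2.mem_iff] at hv
            rcases hv with rfl | rfl
            · exact hra
            · exact hrb
          exact Or.inr ((hUS _).mpr ⟨s(a, b), heT, ⟨a, b, rfl, Or.inr (Or.inr rfl)⟩⟩)
  have hproper : ProperSeq (triangleCopies n) S := by
    constructor
    · intro Y hY
      obtain ⟨e, hel, rfl⟩ := List.mem_map.mp hY
      exact htri_copy e ((hlmem e).mp hel)
    · intro i hi hsub
      have hi' : i.1 < l.length := by rw [← hSlen]; exact i.2
      have hget : S.get i = tri F (l.get ⟨i.1, hi'⟩) := by
        simp [hS, List.get_eq_getElem]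
      have heT : l.get ⟨i.1, hi'⟩ ∈ T := (hlmem _).mp (List.get_mem l _)
      have hein : l.get ⟨i.1, hi'⟩ ∈ tri F (l.get ⟨i.1, hi'⟩) := by
        obtain ⟨a, b, heab⟩ := sym2_rep (l.get ⟨i.1, hi'⟩)
        rw [htri_eq heT.1 heab]
        right; right; exact heab
      have hmem : l.get ⟨i.1, hi'⟩ ∈ unionList (S.take i.1) :=
        hsub (by rw [hget]; exact hein)
      have htake : S.take i.1 = (l.take i.1).map (tri F) := by
        simp [hS]
      rw [htake, mem_unionList] at hmem
      obtain ⟨Y, hY, hxY⟩ := hmem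
      obtain ⟨e', he'tl, rfl⟩ := List.mem_map.mp hY
      have he'T : e' ∈ T := (hlmem e').mp (List.mem_of_mem_take he'tl)
      have heq : l.get ⟨i.1, hi'⟩ = e' := hpriv _ heT e' he'T hxY
      have hnd2 : ((l.take i.1) ++ (l.drop i.1)).Nodup := by
        rw [List.take_append_drop]; exact hlnd
      have hdisj := (List.nodup_append.mp hnd2).2.2
      have hedrop : l.get ⟨i.1, hi'⟩ ∈ l.drop i.1 := by
        have h0 : 0 < (l.drop i.1).length := by
          rw [List.length_drop]; omega
        have hgd : (l.drop i.1).get ⟨0, h0⟩ = l.get ⟨i.1, hi'⟩ := by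
          simp [List.get_eq_getElem, List.getElem_drop]
        rw [← hgd]
        exact List.get_mem _ _
      exact hdisj _ he'tl _ hedrop heq.symm
  -- counting
  set NR := {v ∈ verts F | root F v ≠ v} with hNR
  set Rt := {v ∈ verts F | root F v = v} with hRt
  have hRdesc : clF F \ T = (fun v => s(root F v, v)) '' NR := by
    ext f
    constructor
    · rintro ⟨hfcl, hfT⟩
      obtain ⟨a, b, rfl, hne, hav, hr⟩ := hfcl
      have hbv : b ∈ verts F := verts_closed hav hr
      have hroot : root F a = root F b := root_eq_of_reach hr
      have hex : ¬ ∀ v ∈ s(a, b), root F v ≠ v := fun h => hfT ⟨⟨a, b, rfl, hne, hav, hr⟩, h⟩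
      push_neg at hex
      obtain ⟨v, hv, hvr⟩ := hex
      rw [Sym2.mem_iff] at hv
      rcases hv with rfl | rfl
      · refine ⟨b, ⟨hbv, ?_⟩, ?_⟩
        · rw [← hroot, hvr]; exact hne
        · show s(root F b, b) = s(v, b)
          rw [← hroot, hvr]
      · refine ⟨a, ⟨hav, ?_⟩, ?_⟩
        · rw [hroot, hvr]; exact Ne.symm hne
        · show s(root F a, a) = s(a, v)
          rw [hroot, hvr]; exact Sym2.eq_swap
    · rintro ⟨v, ⟨hvv, hvr⟩, rfl⟩
      refine ⟨⟨v, root F v, Sym2.eq_swap, fun h => hvr h.symm, hvv, reach_root F v⟩, ?_⟩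
      intro hT'
      exact hT'.2 (root F v) (by simp) (root_root F v)
  have hNRinj : Set.InjOn (fun v => s(root F v, v)) NR := by
    intro u hu v hv huv
    simp only [Sym2.eq_iff] at huv
    rcases huv with ⟨-, h⟩ | ⟨h1, h2⟩
    · exact h
    · exfalso
      exact hu.2 (by rw [h2]; exact root_root F v)
  have hRcard : (clF F \ T).ncard = NR.ncard := by
    rw [hRdesc]; exact Set.ncard_image_of_injOn hNRinj
  have hclT : (clF F \ T).ncard + T.ncard = (clF F).ncard :=
    Set.ncard_diff_add_ncard_of_subset hTcl (Set.toFinite _)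
  have hcomps : ncomps F = Rt.ncard := by
    have him : (fun v => comp F v) '' verts F = (fun v => comp F v) '' Rt := by
      apply Set.Subset.antisymm
      · rintro _ ⟨v, hv, rfl⟩
        refine ⟨root F v, ⟨?_, root_root F v⟩, ?_⟩
        · exact verts_closed hv (reach_root F v)
        · exact (comp_eq_of_reach (reach_root F v)).symm
      · rintro _ ⟨v, hv, rfl⟩
        exact ⟨v, hv.1, rfl⟩
    have hinj : Set.InjOn (fun v => comp F v) Rt := by
      intro u hu v hv huv
      have : reach F u v := by
        have h' : comp F u = comp F v := huv
        have : v ∈ comp F u := by rw [h']; exact self_mem_comp v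
        exact this
      rw [← hu.2, ← hv.2]
      exact root_eq_of_reach this
    rw [ncomps, him, Set.ncard_image_of_injOn hinj]
  have hpart : Rt.ncard + NR.ncard = (verts F).ncard := by
    rw [← Set.ncard_union_eq (by
        rw [Set.disjoint_left]
        rintro v ⟨-, h1⟩ ⟨-, h2⟩
        exact h2 h1) (Set.toFinite _) (Set.toFinite _)]
    congr 1
    ext v
    constructor
    · rintro (⟨hv, -⟩ | ⟨hv, -⟩) <;> exact hv
    · intro hv
      by_cases h : root F v = v
      · exact Or.inl ⟨hv, h⟩
      · exact Or.inr ⟨hv, h⟩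
  have hlen2 : S.length = T.ncard := by
    rw [hSlen, hl, Finset.length_toList, ← Set.ncard_eq_toFinset_card]
  refine ⟨S, hproper, ?_⟩
  rw [valSeq, hcover, hlen2]
  have h1 : ((clF F).ncard : ℤ) = ((clF F \ T).ncard : ℤ) + T.ncard := by
    exact_mod_cast congrArg Nat.cast hclT.symm
  have h2 : ((verts F).ncard : ℤ) = (Rt.ncard : ℤ) + NR.ncard := by
    exact_mod_cast congrArg Nat.cast hpart.symm
  rw [h1, hRcard, h2, hcomps]
  ring

/-! ### Sparsity, leaves and the forest formula -/

/-- Sparsity: the independence condition of the count matroid. -/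
def Sparse (F : Set (Sym2 (Fin n))) : Prop :=
  ∀ I ⊆ F, I.Nonempty → (I.ncard : ℤ) ≤ ((verts I).ncard : ℤ) - 1

lemma exists_leaf {F : Set (Sym2 (Fin n))} (hF : F ⊆ (⊤ : SimpleGraph (Fin n)).edgeSet)
    (hsp : Sparse F) (hne : F.Nonempty) :
    ∃ e ∈ F, ∃ v : Fin n, v ∈ e ∧ ∀ f ∈ F, v ∈ f → f = e := by
  classical
  by_contra hno
  push_neg at hno
  set Fs := (Set.toFinite F).toFinset with hFs
  set Vs := (Set.toFinite (verts F)).toFinset with hVs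
  have hmemF : ∀ e, e ∈ Fs ↔ e ∈ F := fun e => Set.Finite.mem_toFinset _
  have hmemV : ∀ v, v ∈ Vs ↔ v ∈ verts F := fun v => Set.Finite.mem_toFinset _
  have hcount : ∑ e ∈ Fs, (Vs.filter (· ∈ e)).card = ∑ v ∈ Vs, (Fs.filter (v ∈ ·)).card := by
    simp_rw [Finset.card_filter]
    rw [Finset.sum_comm]
  have h2 : ∀ e ∈ Fs, (Vs.filter (· ∈ e)).card = 2 := by
    intro e he
    obtain ⟨a, b, rfl⟩ := sym2_rep e
    have heF : s(a, b) ∈ F := (hmemF _).mp he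
    have hab : a ≠ b := by
      have := SimpleGraph.not_isDiag_of_mem_edgeSet _ (hF heF)
      simpa [Sym2.mk_isDiag_iff] using this
    have hfil : Vs.filter (· ∈ s(a, b)) = {a, b} := by
      ext v
      simp only [Finset.mem_filter, Finset.mem_insert, Finset.mem_singleton, Sym2.mem_iff]
      constructor
      · rintro ⟨-, h⟩; exact h
      · rintro (rfl | rfl)
        · exact ⟨(hmemV v).mpr (mem_verts_left heF), Or.inl rfl⟩
        · exact ⟨(hmemV v).mpr (mem_verts_right heF), Or.inr rfl⟩
    rw [hfil, Finset.card_insert_of_notMem (by simp [hab]), Finset.card_singleton]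
  have h3 : ∀ v ∈ Vs, 2 ≤ (Fs.filter (v ∈ ·)).card := by
    intro v hv
    obtain ⟨e, heF, hve⟩ := (hmemV v).mp hv
    obtain ⟨f, hfF, hvf, hfe⟩ := hno e heF v hve
    rw [← Nat.lt_iff_add_one_le, Nat.lt_iff_add_one_le]
    apply Finset.one_lt_card.mpr
    exact ⟨e, Finset.mem_filter.mpr ⟨(hmemF e).mpr heF, hve⟩,
      f, Finset.mem_filter.mpr ⟨(hmemF f).mpr hfF, hvf⟩, fun h => hfe h.symm⟩
  have hsum2 : ∑ e ∈ Fs, (Vs.filter (· ∈ e)).card = 2 * Fs.card := by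
    rw [Finset.sum_congr rfl h2, Finset.sum_const, smul_eq_mul, mul_comm]
  have hsum3 : 2 * Vs.card ≤ ∑ v ∈ Vs, (Fs.filter (v ∈ ·)).card := by
    calc 2 * Vs.card = ∑ _v ∈ Vs, 2 := by rw [Finset.sum_const, smul_eq_mul, mul_comm]
    _ ≤ _ := Finset.sum_le_sum h3
  have hcards : Vs.card ≤ Fs.card := by omega
  have hsp' := hsp F Set.Subset.rfl hne
  have hF' : F.ncard = Fs.card := Set.ncard_eq_toFinset_card F
  have hV' : (verts F).ncard = Vs.card := Set.ncard_eq_toFinset_card (verts F)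
  rw [hF', hV'] at hsp'
  omega


lemma verts_mono {F G : Set (Sym2 (Fin n))} (h : F ⊆ G) : verts F ⊆ verts G :=
  fun _ ⟨e, he, hv⟩ => ⟨e, h he, hv⟩

lemma sparse_mono {F G : Set (Sym2 (Fin n))} (h : F ⊆ G) (hG : Sparse G) : Sparse F :=
  fun J hJ hJn => hG J (hJ.trans h) hJn

lemma sparse_empty : Sparse (∅ : Set (Sym2 (Fin n))) := by
  intro J hJ hJn
  rw [Set.subset_empty_iff] at hJ
  exact absurd hJ (Set.nonempty_iff_ne_empty.mp hJn)

/-- Removing a leaf edge: how reachability changes. -/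
lemma leaf_reach {F : Set (Sym2 (Fin n))} {u v : Fin n} (huv : u ≠ v)
    (hleaf : ∀ f ∈ F, v ∈ f → f = s(u, v)) {x y : Fin n}
    (h : reach F x y) :
    (x ≠ v → (reach (F \ {s(u, v)}) x y ∨ (y = v ∧ reach (F \ {s(u, v)}) x u))) ∧
    (x = v → (reach (F \ {s(u, v)}) u y ∨ y = v)) := by
  induction h using Relation.ReflTransGen.head_induction_on with
  | refl =>
    exact ⟨fun _ => Or.inl Relation.ReflTransGen.refl, fun hx => Or.inr hx⟩
  | @head a c hac hcb ih =>
    constructor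
    · intro hav
      by_cases hcv : c = v
      · have hface : s(a, c) = s(u, v) := hleaf _ hac (by rw [hcv]; simp)
        have hau : a = u := by
          rw [hcv, Sym2.eq_iff] at hface
          rcases hface with ⟨h1, -⟩ | ⟨h1, -⟩
          · exact h1
          · exact absurd h1 hav
        subst hau
        rcases ih.2 hcv with h | h
        · exact Or.inl h
        · exact Or.inr ⟨h, Relation.ReflTransGen.refl⟩
      · have hstep' : s(a, c) ∈ F \ {s(u, v)} := by
          refine ⟨hac, ?_⟩
          intro hmem
          rw [Set.mem_singleton_iff, Sym2.eq_iff] at hmem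
          rcases hmem with ⟨-, h2⟩ | ⟨h1, -⟩
          · exact hcv h2
          · exact hav h1
        rcases ih.1 hcv with h | ⟨h1, h2⟩
        · exact Or.inl (Relation.ReflTransGen.head hstep' h)
        · exact Or.inr ⟨h1, Relation.ReflTransGen.head hstep' h2⟩
    · intro hav
      have hface : s(a, c) = s(u, v) := hleaf _ hac (by rw [hav]; simp)
      have hcu : c = u := by
        rw [hav, Sym2.eq_iff] at hface
        rcases hface with ⟨h1, -⟩ | ⟨-, h2⟩
        · exact absurd h1.symm huv
        · exact h2
      subst hcu
      rcases ih.1 huv with h | ⟨h1, -⟩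
      · exact Or.inl h
      · exact Or.inr h1

/-- Removing an isolated edge. -/
lemma iso_removal {F : Set (Sym2 (Fin n))} {u v : Fin n} (huv : u ≠ v)
    (he : s(u, v) ∈ F)
    (hleafv : ∀ f ∈ F, v ∈ f → f = s(u, v)) (hleafu : ∀ f ∈ F, u ∈ f → f = s(u, v)) :
    verts (F \ {s(u, v)}) = verts F \ {u, v} ∧
    ncomps (F \ {s(u, v)}) + 1 = ncomps F := by
  set e := s(u, v) with hedef
  set F' := F \ {e} with hF'
  have hvF' : verts F' = verts F \ {u, v} := by
    ext w
    constructor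
    · rintro ⟨f, ⟨hfF, hfne⟩, hwf⟩
      refine ⟨⟨f, hfF, hwf⟩, ?_⟩
      rintro (rfl | rfl)
      · exact hfne (hleafu f hfF hwf)
      · exact hfne (hleafv f hfF hwf)
    · rintro ⟨⟨f, hfF, hwf⟩, hw⟩
      refine ⟨f, ⟨hfF, ?_⟩, hwf⟩
      intro hfe
      rw [Set.mem_singleton_iff] at hfe
      rw [hfe, hedef, Sym2.mem_iff] at hwf
      simp only [Set.mem_insert_iff, Set.mem_singleton_iff] at hw
      tauto
  -- steps from outside {u,v} stay outside and avoid e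
  have hkey : ∀ {w x : Fin n}, reach F w x → w ∉ ({u, v} : Set (Fin n)) →
      reach F' w x ∧ x ∉ ({u, v} : Set (Fin n)) := by
    intro w x h hw
    induction h with
    | refl => exact ⟨Relation.ReflTransGen.refl, hw⟩
    | @tail c d hrest hstep ih =>
      have hcd : s(c, d) ∈ F := hstep
      have hdne : d ∉ ({u, v} : Set (Fin n)) := by
        rintro (hd | hd)
        · have := hleafu _ hcd (by rw [hd]; simp)
          rw [hedef, hd, Sym2.eq_iff] at this
          rcases this with ⟨-, h2⟩ | ⟨h1, -⟩
          · exact huv h2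
          · exact ih.2 (Or.inr h1)
        · have := hleafv _ hcd (by rw [hd]; simp)
          rw [hedef, hd, Sym2.eq_iff] at this
          rcases this with ⟨h1, -⟩ | ⟨-, h2⟩
          · exact ih.2 (Or.inl h1)
          · exact huv h2.symm
      have hstep' : s(c, d) ∈ F' := by
        refine ⟨hcd, ?_⟩
        intro hmem
        rw [Set.mem_singleton_iff, hedef, Sym2.eq_iff] at hmem
        rcases hmem with ⟨h1, -⟩ | ⟨h1, -⟩
        · exact ih.2 (Or.inl h1)
        · exact ih.2 (Or.inr h1)
      exact ⟨ih.1.tail hstep', hdne⟩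
  have hcompw : ∀ w ∈ verts F', comp F w = comp F' w := by
    intro w hw
    have hwuv : w ∉ ({u, v} : Set (Fin n)) := by
      rw [hvF'] at hw; exact hw.2
    ext x
    exact ⟨fun h => (hkey h hwuv).1, fun h => reach_mono Set.diff_subset h⟩
  have hcompu : comp F u = ({u, v} : Set (Fin n)) := by
    apply Set.Subset.antisymm
    · intro x hx
      exact reach_closed (F := F) (A := {u, v}) (by
        rintro a (ha | ha) b hab
        · have := hleafu _ hab (by rw [ha]; simp)
          rw [hedef, ha, Sym2.eq_iff] at this
          rcases this with ⟨-, h2⟩ | ⟨h1, -⟩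
          · exact Or.inr h2
          · exact absurd h1 huv
        · have := hleafv _ hab (by rw [ha]; simp)
          rw [hedef, ha, Sym2.eq_iff] at this
          rcases this with ⟨h1, -⟩ | ⟨-, h2⟩
          · exact absurd h1.symm huv
          · exact Or.inl h2) hx (Or.inl rfl)
    · rintro x (hx1 | hx1)
      · rw [hx1]; exact self_mem_comp u
      · rw [hx1]; exact reach_single he
  have hvuv : u ∈ verts F ∧ v ∈ verts F := ⟨mem_verts_left he, mem_verts_right he⟩
  have him : (fun w => comp F w) '' verts F =
      insert (comp F u) ((fun w => comp F' w) '' verts F') := by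
    ext s
    constructor
    · rintro ⟨w, hw, rfl⟩
      by_cases hwuv : w ∈ ({u, v} : Set (Fin n))
      · refine Set.mem_insert_iff.mpr (Or.inl ?_)
        show comp F w = comp F u
        rcases hwuv with h | h
        · rw [h]
        · have h' : w = v := h
          rw [h']
          exact (comp_eq_of_reach (reach_single he)).symm
      · right
        refine ⟨w, ?_, (hcompw w ?_).symm⟩ <;> rw [hvF'] <;> exact ⟨hw, hwuv⟩
    · rintro (rfl | ⟨w, hw, rfl⟩)
      · exact ⟨u, hvuv.1, rfl⟩
      · have hwF : w ∈ verts F := ((hvF' ▸ hw) : w ∈ verts F \ {u, v}).1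
        exact ⟨w, hwF, hcompw w hw⟩
  have hnotmem : comp F u ∉ (fun w => comp F' w) '' verts F' := by
    rintro ⟨w, hw, hcw⟩
    have hcw' : comp F' w = comp F u := hcw
    have hu : u ∈ comp F' w := by rw [hcw', hcompu]; exact Or.inl rfl
    have hwu : w ≠ u := by
      intro h
      rw [hvF'] at hw
      exact hw.2 (Or.inl h)
    have : u ∈ verts F' := mem_verts_of_reach hu hwu
    rw [hvF'] at this
    exact this.2 (Or.inl rfl)
  rw [ncomps, ncomps, him, Set.ncard_insert_of_notMem hnotmem (Set.toFinite _)]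
  exact ⟨hvF', rfl⟩

/-- Removing a pendant (leaf) edge whose other endpoint has another edge. -/
lemma pendant_removal {F : Set (Sym2 (Fin n))} {u v : Fin n} (huv : u ≠ v)
    (he : s(u, v) ∈ F)
    (hleafv : ∀ f ∈ F, v ∈ f → f = s(u, v))
    (hu : ∃ f ∈ F, u ∈ f ∧ f ≠ s(u, v)) :
    verts (F \ {s(u, v)}) = verts F \ {v} ∧
    ncomps (F \ {s(u, v)}) = ncomps F := by
  set e := s(u, v) with hedef
  set F' := F \ {e} with hF'
  obtain ⟨f, hfF, huf, hfne⟩ := hu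
  have hfF' : f ∈ F' := ⟨hfF, hfne⟩
  have huF' : u ∈ verts F' := ⟨f, hfF', huf⟩
  have hvF' : verts F' = verts F \ {v} := by
    ext w
    constructor
    · rintro ⟨g, ⟨hgF, hgne⟩, hwg⟩
      refine ⟨⟨g, hgF, hwg⟩, ?_⟩
      rintro rfl
      exact hgne (hleafv g hgF hwg)
    · rintro ⟨⟨g, hgF, hwg⟩, hw⟩
      by_cases hge : g = e
      · rw [hge, hedef, Sym2.mem_iff] at hwg
        rcases hwg with rfl | rfl
        · exact huF'
        · exact absurd rfl hw
      · exact ⟨g, ⟨hgF, hge⟩, hwg⟩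
  have hvnF' : v ∉ verts F' := by rw [hvF']; rintro ⟨-, h⟩; exact h rfl
  have hiff : ∀ {x y : Fin n}, x ≠ v → y ≠ v → (reach F x y ↔ reach F' x y) := by
    intro x y hx hy
    constructor
    · intro h
      rcases (leaf_reach huv hleafv h).1 hx with h' | ⟨h1, -⟩
      · exact h'
      · exact absurd h1 hy
    · exact reach_mono Set.diff_subset
  have hreachv : ∀ {x : Fin n}, x ≠ v → (reach F x v ↔ reach F x u) := by
    intro x hx
    constructor
    · intro h
      rcases (leaf_reach huv hleafv h).1 hx with h' | ⟨-, h2⟩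
      · exfalso
        have hxv : x ≠ v := hx
        have : v ∈ verts F' := mem_verts_of_reach h' hxv
        exact hvnF' this
      · exact reach_mono Set.diff_subset h2
    · intro h
      exact h.tail he
  have hcomp' : ∀ x ∈ verts F', comp F' x = comp F x \ {v} := by
    intro x hx
    have hxv : x ≠ v := by rw [hvF'] at hx; exact hx.2
    ext w
    constructor
    · intro hw
      refine ⟨reach_mono Set.diff_subset hw, ?_⟩
      rintro rfl
      exact hvnF' (mem_verts_of_reach hw hxv)
    · rintro ⟨hw, hwv⟩
      exact (hiff hxv hwv).mp hw
  have him : (fun w => comp F w) '' verts F = (fun w => comp F w) '' verts F' := by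
    apply Set.Subset.antisymm
    · rintro s ⟨w, hw, rfl⟩
      by_cases hwv : w = v
      · refine ⟨u, huF', ?_⟩
        show comp F u = comp F w
        rw [hwv]
        exact comp_eq_of_reach (reach_single he)
      · exact ⟨w, by rw [hvF']; exact ⟨hw, hwv⟩, rfl⟩
    · rintro s ⟨w, hw, rfl⟩
      exact ⟨w, (verts_mono Set.diff_subset) hw, rfl⟩
  have hinj : Set.InjOn (fun s : Set (Fin n) => s \ {v}) ((fun w => comp F w) '' verts F') := by
    rintro s ⟨x, hx, rfl⟩ t ⟨y, hy, rfl⟩ hst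
    have hxv : x ≠ v := by rw [hvF'] at hx; exact hx.2
    have hyv : y ≠ v := by rw [hvF'] at hy; exact hy.2
    simp only at hst ⊢
    ext w
    by_cases hwv : w = v
    · rw [hwv]
      constructor
      · intro h
        have hux : u ∈ comp F x := (hreachv hxv).mp h
        have h2 : u ∈ comp F x \ {v} := ⟨hux, huv⟩
        rw [hst] at h2
        exact (hreachv hyv).mpr h2.1
      · intro h
        have huy : u ∈ comp F y := (hreachv hyv).mp h
        have h2 : u ∈ comp F y \ {v} := ⟨huy, huv⟩
        rw [← hst] at h2
        exact (hreachv hxv).mpr h2.1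
    · constructor
      · intro h
        have : w ∈ comp F x \ {v} := ⟨h, hwv⟩
        rw [hst] at this
        exact this.1
      · intro h
        have : w ∈ comp F y \ {v} := ⟨h, hwv⟩
        rw [← hst] at this
        exact this.1
  have him2 : (fun w => comp F' w) '' verts F' =
      (fun s : Set (Fin n) => s \ {v}) '' ((fun w => comp F w) '' verts F') := by
    rw [← Set.image_comp]
    exact Set.image_congr (fun x hx => hcomp' x hx)
  constructor
  · exact hvF'
  · rw [ncomps, ncomps, him2, Set.ncard_image_of_injOn hinj, ← him]

lemma verts_empty : verts (∅ : Set (Sym2 (Fin n))) = ∅ := by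
  ext v; simp [verts]

lemma ncomps_empty : ncomps (∅ : Set (Sym2 (Fin n))) = 0 := by
  rw [ncomps, verts_empty]
  simp

lemma forest_formula {F : Set (Sym2 (Fin n))} (hF : F ⊆ (⊤ : SimpleGraph (Fin n)).edgeSet)
    (hsp : Sparse F) : F.ncard + ncomps F = (verts F).ncard := by
  classical
  have main : ∀ N : ℕ, ∀ F : Set (Sym2 (Fin n)), F.ncard = N →
      F ⊆ (⊤ : SimpleGraph (Fin n)).edgeSet → Sparse F →
      F.ncard + ncomps F = (verts F).ncard := by
    intro N
    induction N using Nat.strong_induction_on with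
    | _ N ih =>
      intro F hN hFE hsp
      rcases F.eq_empty_or_nonempty with rfl | hne
      · rw [verts_empty, ncomps_empty]
        simp
      · obtain ⟨e, heF, v, hve, hleaf⟩ := exists_leaf hFE hsp hne
        obtain ⟨u, hspec⟩ : ∃ u, s(v, u) = e := ⟨_, Sym2.other_spec hve⟩
        have huv : u ≠ v := by
          intro h
          have hdiag := SimpleGraph.not_isDiag_of_mem_edgeSet _ (hFE heF)
          rw [← hspec, h] at hdiag
          exact hdiag (Sym2.mk_isDiag_iff.mpr rfl)
        have heq : s(u, v) = e := by rw [Sym2.eq_swap]; exact hspec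
        have heF' : s(u, v) ∈ F := by rw [heq]; exact heF
        have hleaf' : ∀ f ∈ F, v ∈ f → f = s(u, v) := by
          intro f hf hvf
          rw [heq]; exact hleaf f hf hvf
        set F' := F \ {s(u, v)} with hF'
        have hF'E : F' ⊆ (⊤ : SimpleGraph (Fin n)).edgeSet :=
          (Set.diff_subset).trans hFE
        have hsp' : Sparse F' := sparse_mono Set.diff_subset hsp
        have hcard' : F'.ncard + 1 = F.ncard := Set.ncard_diff_singleton_add_one heF' 
          (Set.toFinite _)
        have hlt : F'.ncard < N := by omega
        have IH := ih F'.ncard hlt F' rfl hF'E hsp'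
        by_cases hul : ∀ f ∈ F, u ∈ f → f = s(u, v)
        · -- isolated edge
          obtain ⟨hv', hc'⟩ := iso_removal huv heF' hleaf' hul
          rw [← hF'] at hv' hc'
          have hsub : ({u, v} : Set (Fin n)) ⊆ verts F := by
            rintro w (rfl | rfl)
            · exact mem_verts_left heF'
            · exact mem_verts_right heF'
          have hcard2 : (verts F \ {u, v}).ncard + ({u, v} : Set (Fin n)).ncard
              = (verts F).ncard := Set.ncard_diff_add_ncard_of_subset hsub (Set.toFinite _)
          have h2 : ({u, v} : Set (Fin n)).ncard = 2 := by
            rw [Set.ncard_insert_of_notMem (by simp [huv]) (Set.toFinite _),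
              Set.ncard_singleton]
          rw [hv'] at IH
          omega
        · push_neg at hul
          obtain ⟨f, hfF, huf, hfne⟩ := hul
          obtain ⟨hv', hc'⟩ := pendant_removal huv heF' hleaf' ⟨f, hfF, huf, hfne⟩
          rw [← hF'] at hv' hc'
          have hsub : ({v} : Set (Fin n)) ⊆ verts F := by
            rintro w rfl
            exact mem_verts_right heF'
          have hcard2 : (verts F \ {v}).ncard + ({v} : Set (Fin n)).ncard
              = (verts F).ncard := Set.ncard_diff_add_ncard_of_subset hsub (Set.toFinite _)
          rw [Set.ncard_singleton] at hcard2
          rw [hv'] at IH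
          omega
  exact main F.ncard F rfl hF hsp

/-- If `K` is sparse and has exactly `|V(K)| - 1` edges then it is connected. -/
lemma treecount_connected {K : Set (Sym2 (Fin n))}
    (hK : K ⊆ (⊤ : SimpleGraph (Fin n)).edgeSet) (hsp : Sparse K)
    (hcount : (K.ncard : ℤ) = ((verts K).ncard : ℤ) - 1)
    {u v : Fin n} (hu : u ∈ verts K) (hv : v ∈ verts K) : reach K u v := by
  have hform := forest_formula hK hsp
  have hc1 : ncomps K = 1 := by omega
  obtain ⟨s, hs⟩ := Set.ncard_eq_one.mp hc1
  have h1 : comp K u = s := by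
    have : comp K u ∈ (fun w => comp K w) '' verts K := ⟨u, hu, rfl⟩
    rw [hs] at this
    exact this
  have h2 : comp K v = s := by
    have : comp K v ∈ (fun w => comp K w) '' verts K := ⟨v, hv, rfl⟩
    rw [hs] at this
    exact this
  have : v ∈ comp K u := by
    rw [h1, ← h2]
    exact self_mem_comp v
  exact this

/-- Adding a dependence-creating edge: its endpoints are joined in `I`. -/
lemma dep_edge_reach {I : Set (Sym2 (Fin n))} (hI : I ⊆ (⊤ : SimpleGraph (Fin n)).edgeSet)
    (hsp : Sparse I) {u v : Fin n} (huv : u ≠ v)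
    (hdep : ¬ Sparse (insert s(u, v) I)) : u ∈ verts I ∧ v ∈ verts I ∧ reach I u v := by
  rw [Sparse] at hdep
  push_neg at hdep
  obtain ⟨J, hJsub, hJne, hJbig⟩ := hdep
  have heJ : s(u, v) ∈ J := by
    by_contra h
    have hJI : J ⊆ I := fun x hx =>
      (Set.mem_insert_iff.mp (hJsub hx)).resolve_left (by rintro rfl; exact h hx)
    exact absurd (hsp J hJI hJne) (not_le.mpr hJbig)
  set K := J \ {s(u, v)} with hKdef
  have hKI : K ⊆ I := fun x hx =>
    (Set.mem_insert_iff.mp (hJsub hx.1)).resolve_left hx.2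
  have hKne : K.Nonempty := by
    rcases K.eq_empty_or_nonempty with h | h
    · exfalso
      have hJeq : J = {s(u, v)} := by
        apply Set.Subset.antisymm
        · intro x hx
          by_contra hxe
          exact (Set.eq_empty_iff_forall_notMem.mp h x) ⟨hx, hxe⟩
        · rintro x hx
          rw [Set.mem_singleton_iff] at hx
          rw [hx]; exact heJ
      have h2 : verts ({s(u, v)} : Set (Sym2 (Fin n))) = {u, v} := by
        ext w
        constructor
        · rintro ⟨f, hf, hw⟩
          rw [Set.mem_singleton_iff] at hf
          rw [hf, Sym2.mem_iff] at hw
          exact hw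
        · intro hw
          rcases hw with h' | h'
          · exact ⟨s(u, v), rfl, by rw [h']; simp⟩
          · rw [Set.mem_singleton_iff] at h'
            exact ⟨s(u, v), rfl, by rw [h']; simp⟩
      rw [hJeq, h2] at hJbig
      have h3 : ({s(u, v)} : Set (Sym2 (Fin n))).ncard = 1 := Set.ncard_singleton _
      have h4 : ({u, v} : Set (Fin n)).ncard = 2 := by
        rw [Set.ncard_insert_of_notMem (by simp [huv]) (Set.toFinite _),
          Set.ncard_singleton]
      rw [h3, h4] at hJbig
      omega
    · exact h
  have hKsp := hsp K hKI hKne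
  have hKcard : K.ncard + 1 = J.ncard := Set.ncard_diff_singleton_add_one heJ (Set.toFinite _)
  have hVsub : verts K ⊆ verts J := verts_mono Set.diff_subset
  have hVle : (verts K).ncard ≤ (verts J).ncard := Set.ncard_le_ncard hVsub (Set.toFinite _)
  have hVeq : verts K = verts J :=
    Set.eq_of_subset_of_ncard_le hVsub (by omega) (Set.toFinite _)
  have hKcount : (K.ncard : ℤ) = ((verts K).ncard : ℤ) - 1 := by
    have : (verts K).ncard = (verts J).ncard := by rw [hVeq]
    omega
  have hKE : K ⊆ (⊤ : SimpleGraph (Fin n)).edgeSet := hKI.trans hI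
  have huJ : u ∈ verts J := ⟨s(u, v), heJ, by simp⟩
  have hvJ : v ∈ verts J := ⟨s(u, v), heJ, by simp⟩
  have huK : u ∈ verts K := by rw [hVeq]; exact huJ
  have hvK : v ∈ verts K := by rw [hVeq]; exact hvJ
  have hr := treecount_connected hKE (sparse_mono hKI hsp) hKcount huK hvK
  exact ⟨verts_mono hKI huK, verts_mono hKI hvK, reach_mono hKI hr⟩

/-- Spanning forest. -/
lemma exists_spanning_forest {F : Set (Sym2 (Fin n))}
    (hF : F ⊆ (⊤ : SimpleGraph (Fin n)).edgeSet) :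
    ∃ I ⊆ F, Sparse I ∧ I.ncard + ncomps F = (verts F).ncard := by
  classical
  set 𝒮 := {I : Set (Sym2 (Fin n)) | I ⊆ F ∧ Sparse I} with h𝒮
  have hfin : 𝒮.Finite := ((Set.toFinite F).finite_subsets).subset (fun I hI => hI.1)
  have hSne : (∅ : Set (Sym2 (Fin n))) ∈ 𝒮 := ⟨Set.empty_subset F, sparse_empty⟩
  obtain ⟨I, hIS, hImax⟩ :=
    Set.Finite.exists_maximalFor (fun I => I.ncard) 𝒮 hfin ⟨∅, hSne⟩
  have hIsp : Sparse I := hIS.2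
  have hIE : I ⊆ (⊤ : SimpleGraph (Fin n)).edgeSet := hIS.1.trans hF
  have hdep : ∀ g ∈ F, g ∉ I → ¬ Sparse (insert g I) := by
    intro g hgF hgI hsp'
    have hmem : insert g I ∈ 𝒮 := ⟨Set.insert_subset hgF hIS.1, hsp'⟩
    have hle : I.ncard ≤ (insert g I).ncard :=
      Set.ncard_le_ncard (Set.subset_insert _ _) (Set.toFinite _)
    have heq : (insert g I).ncard ≤ I.ncard := hImax hmem hle
    rw [Set.ncard_insert_of_notMem hgI (Set.toFinite _)] at heq
    omega
  have hreach : ∀ g ∈ F, ∀ a b : Fin n, g = s(a, b) →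
      a ∈ verts I ∧ b ∈ verts I ∧ reach I a b := by
    intro g hg a b hgab
    by_cases hgI : g ∈ I
    · rw [hgab] at hgI
      exact ⟨mem_verts_left hgI, mem_verts_right hgI, reach_single hgI⟩
    · have hab : a ≠ b := by
        have := SimpleGraph.not_isDiag_of_mem_edgeSet _ (hF hg)
        rw [hgab] at this
        simpa [Sym2.mk_isDiag_iff] using this
      refine dep_edge_reach hIE hIsp hab ?_
      rw [← hgab]
      exact hdep g hg hgI
  have hverts : verts I = verts F := by
    apply Set.Subset.antisymm (verts_mono hIS.1)
    rintro w ⟨g, hg, hw⟩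
    obtain ⟨a, b, rfl⟩ := sym2_rep g
    rw [Sym2.mem_iff] at hw
    obtain ⟨ha, hb, -⟩ := hreach _ hg a b rfl
    rcases hw with rfl | rfl
    · exact ha
    · exact hb
  have hrch2 : ∀ a b : Fin n, reach F a b → reach I a b := by
    intro a b h
    induction h with
    | refl => exact Relation.ReflTransGen.refl
    | @tail c d hrest hstep ih =>
      exact ih.trans (hreach _ hstep c d rfl).2.2
  have hcomp : ∀ w : Fin n, comp I w = comp F w := by
    intro w
    ext x
    exact ⟨fun h => reach_mono hIS.1 h, fun h => hrch2 w x h⟩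
  have hncomp : ncomps I = ncomps F := by
    have hfun : (fun v : Fin n => comp I v) = (fun v => comp F v) := funext hcomp
    rw [ncomps, ncomps, hverts, hfun]
  refine ⟨I, hIS.1, hIsp, ?_⟩
  rw [← hverts, ← hncomp]
  exact forest_formula hIE hIsp

/-- Stars are sparse. -/
lemma star_sparse {F : Set (Sym2 (Fin n))} (hF : F ⊆ (⊤ : SimpleGraph (Fin n)).edgeSet)
    {x : Fin n} (hx : ∀ e ∈ F, x ∈ e) : Sparse F := by
  classical
  intro J hJF hJne
  set g : Sym2 (Fin n) → Fin n := fun e => if h : x ∈ e then (Sym2.Mem.other h) else x with hg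
  have hother : ∀ e ∈ J, s(x, g e) = e := by
    intro e he
    simp only [hg, dif_pos (hx e (hJF he))]
    exact Sym2.other_spec (hx e (hJF he))
  have hinj : Set.InjOn g J := by
    intro e he f hf hef
    rw [← hother e he, ← hother f hf, hef]
  have hxim : x ∉ g '' J := by
    rintro ⟨e, he, hee⟩
    have : e = s(x, x) := by rw [← hother e he, hee]
    have hdiag : e.IsDiag := by rw [this]; exact Sym2.mk_isDiag_iff.mpr rfl
    exact SimpleGraph.not_isDiag_of_mem_edgeSet _ (hF (hJF he)) hdiag
  have hverts : verts J = insert x (g '' J) := by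
    ext v
    constructor
    · rintro ⟨e, he, hv⟩
      rw [← hother e he, Sym2.mem_iff] at hv
      rcases hv with rfl | rfl
      · exact Set.mem_insert _ _
      · exact Set.mem_insert_of_mem _ ⟨e, he, rfl⟩
    · rintro (rfl | ⟨e, he, rfl⟩)
      · obtain ⟨e, he⟩ := hJne
        exact ⟨e, he, hx e (hJF he)⟩
      · refine ⟨e, he, ?_⟩
        have hxe := hx e (hJF he)
        simp only [hg, dif_pos hxe]
        exact Sym2.other_mem hxe
  have hcard : (verts J).ncard = J.ncard + 1 := by
    rw [hverts, Set.ncard_insert_of_notMem hxim (Set.toFinite _),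
      Set.ncard_image_of_injOn hinj]
  rw [hcard]
  push_cast
  omega

lemma triangle_circuit {M : Matroid (Sym2 (Fin n))}
    (hME : M.E = (⊤ : SimpleGraph (Fin n)).edgeSet)
    (hMI : ∀ F : Set (Sym2 (Fin n)), M.Indep F ↔
      F ⊆ (⊤ : SimpleGraph (Fin n)).edgeSet ∧
      ∀ I ⊆ F, I.Nonempty → (I.ncard : ℤ) ≤ (verts I).ncard - 1)
    {C : Set (Sym2 (Fin n))} (hC : C ∈ triangleCopies n) : M.IsCircuit' C := by
  obtain ⟨x, y, z, hxy, hxz, hyz, rfl⟩ := hC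
  have exy : s(x, y) ∈ (⊤ : SimpleGraph (Fin n)).edgeSet := by simpa using hxy
  have exz : s(x, z) ∈ (⊤ : SimpleGraph (Fin n)).edgeSet := by simpa using hxz
  have eyz : s(y, z) ∈ (⊤ : SimpleGraph (Fin n)).edgeSet := by simpa using hyz
  have hsubE : ({s(x, y), s(x, z), s(y, z)} : Set (Sym2 (Fin n))) ⊆
      (⊤ : SimpleGraph (Fin n)).edgeSet := by
    rintro e (rfl | rfl | rfl) <;> assumption
  have hd1 : s(x, y) ≠ s(x, z) := by simp [Sym2.eq_iff]; tauto
  have hd2 : s(x, y) ≠ s(y, z) := by simp [Sym2.eq_iff]; tauto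
  have hd3 : s(x, z) ≠ s(y, z) := by simp [Sym2.eq_iff]; tauto
  refine ⟨hME ▸ hsubE, ?_, ?_⟩
  · rw [hMI]
    rintro ⟨-, hcount⟩
    have hC3 : ({s(x, y), s(x, z), s(y, z)} : Set (Sym2 (Fin n))).ncard = 3 := by
      rw [Set.ncard_insert_of_notMem (by simp [hd1, hd2]) (Set.toFinite _),
        Set.ncard_insert_of_notMem (by simp [hd3]) (Set.toFinite _),
        Set.ncard_singleton]
    have hV : verts ({s(x, y), s(x, z), s(y, z)} : Set (Sym2 (Fin n))) = {x, y, z} := by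
      ext w
      simp only [verts, Set.mem_setOf_eq, Set.mem_insert_iff, Set.mem_singleton_iff]
      constructor
      · rintro ⟨e, (rfl | rfl | rfl), hv⟩ <;> rw [Sym2.mem_iff] at hv <;> tauto
      · rintro (h | h | h)
        · exact ⟨s(x, y), Or.inl rfl, by simp [h]⟩
        · exact ⟨s(x, y), Or.inl rfl, by simp [h]⟩
        · exact ⟨s(y, z), Or.inr (Or.inr rfl), by simp [h]⟩
    have hV3 : (verts ({s(x, y), s(x, z), s(y, z)} : Set (Sym2 (Fin n)))).ncard = 3 := by
      rw [hV, Set.ncard_insert_of_notMem (by simp [hxy, hxz]) (Set.toFinite _),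
        Set.ncard_insert_of_notMem (by simp [hyz]) (Set.toFinite _),
        Set.ncard_singleton]
    have := hcount _ (le_refl _) ⟨s(x, y), by simp⟩
    rw [hC3, hV3] at this
    omega
  · intro e he
    rw [hMI]
    have hstar : ∀ (D : Set (Sym2 (Fin n))) (w : Fin n),
        D ⊆ (⊤ : SimpleGraph (Fin n)).edgeSet → (∀ f ∈ D, w ∈ f) →
        D ⊆ (⊤ : SimpleGraph (Fin n)).edgeSet ∧
        ∀ I ⊆ D, I.Nonempty → (I.ncard : ℤ) ≤ (verts I).ncard - 1 :=
      fun D w hD hw => ⟨hD, star_sparse hD hw⟩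
    rcases he with rfl | rfl | rfl
    · -- remove s(x,y): star at z
      have : ({s(x, y), s(x, z), s(y, z)} : Set (Sym2 (Fin n))) \ {s(x, y)} =
          {s(x, z), s(y, z)} := by
        ext f
        simp only [Set.mem_diff, Set.mem_insert_iff, Set.mem_singleton_iff]
        constructor
        · rintro ⟨h, hne⟩
          rcases h with h | h | h
          · exact absurd h hne
          · exact Or.inl h
          · exact Or.inr h
        · rintro (rfl | rfl)
          · exact ⟨by tauto, hd1.symm⟩
          · exact ⟨by tauto, hd2.symm⟩
      rw [this]
      exact hstar _ z (by rintro f (rfl | rfl) <;> assumption)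
        (by rintro f (rfl | rfl) <;> simp)
    · -- remove s(x,z): star at y
      have : ({s(x, y), s(x, z), s(y, z)} : Set (Sym2 (Fin n))) \ {s(x, z)} =
          {s(x, y), s(y, z)} := by
        ext f
        simp only [Set.mem_diff, Set.mem_insert_iff, Set.mem_singleton_iff]
        constructor
        · rintro ⟨h, hne⟩
          rcases h with h | h | h
          · exact Or.inl h
          · exact absurd h hne
          · exact Or.inr h
        · rintro (rfl | rfl)
          · exact ⟨by tauto, hd1⟩
          · exact ⟨by tauto, hd3.symm⟩
      rw [this]
      exact hstar _ y (by rintro f (rfl | rfl) <;> assumption)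
        (by rintro f (rfl | rfl) <;> simp)
    · -- remove s(y,z): star at x
      have : ({s(x, y), s(x, z), s(y, z)} : Set (Sym2 (Fin n))) \ {s(y, z)} =
          {s(x, y), s(x, z)} := by
        ext f
        simp only [Set.mem_diff, Set.mem_insert_iff, Set.mem_singleton_iff]
        constructor
        · rintro ⟨h, hne⟩
          rcases h with h | h | h
          · exact Or.inl h
          · exact Or.inr h
          · exact absurd h hne
        · rintro (rfl | rfl)
          · exact ⟨by tauto, hd2⟩
          · exact ⟨by tauto, hd3⟩
      rw [this]
      exact hstar _ x (by rintro f (rfl | rfl) <;> assumption)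
        (by rintro f (rfl | rfl) <;> simp)

end K3Graph


theorem cycleMatroid_unique_maximal_K3 (n : ℕ) (M : Matroid (Sym2 (Fin n)))
    (hME : M.E = (⊤ : SimpleGraph (Fin n)).edgeSet)
    (hMI : ∀ F : Set (Sym2 (Fin n)), M.Indep F ↔
      F ⊆ (⊤ : SimpleGraph (Fin n)).edgeSet ∧
      ∀ I ⊆ F, I.Nonempty → (I.ncard : ℤ) ≤ (verts I).ncard - 1) :
    IsXMatroid (⊤ : SimpleGraph (Fin n)).edgeSet (triangleCopies n) M ∧
    (∀ N : Matroid (Sym2 (Fin n)),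
      IsXMatroid (⊤ : SimpleGraph (Fin n)).edgeSet (triangleCopies n) N → WeakLE N M) ∧
    ∀ F ⊆ (⊤ : SimpleGraph (Fin n)).edgeSet, (mrk M F : ℤ) = valX (triangleCopies n) F := by
  classical
  have hcirc : ∀ C ∈ triangleCopies n, M.IsCircuit' C := fun C hC => triangle_circuit hME hMI hC
  have hX : IsXMatroid (⊤ : SimpleGraph (Fin n)).edgeSet (triangleCopies n) M := ⟨hME, hcirc⟩
  refine ⟨hX, ?_, ?_⟩
  · -- maximality in the weak order
    intro N hN I hNI
    rw [hMI]
    have hIE : I ⊆ (⊤ : SimpleGraph (Fin n)).edgeSet := by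
      rw [← hN.1]; exact hNI.subset_ground
    refine ⟨hIE, ?_⟩
    intro J hJI hJne
    have hJE : J ⊆ (⊤ : SimpleGraph (Fin n)).edgeSet := hJI.trans hIE
    obtain ⟨S, hproper, hval⟩ := exists_good_seq hJE
    have hcircN : ∀ C ∈ S, N.IsCircuit' C := fun C hC => hN.2 C (hproper.1 C hC)
    have hJN : N.Indep J := hNI.subset hJI
    have hb := rank_seq_lemma S hcircN hproper.2 (F := J) (I := J)
      (by rw [hN.1]; exact hJE) (Set.toFinite _) hJN Set.Subset.rfl
    have hval' : ((J ∪ unionList S).ncard : ℤ) - S.length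
        = ((verts J).ncard : ℤ) - ncomps J := hval
    have hc1 : 1 ≤ ncomps J := by
      obtain ⟨e, he⟩ := hJne
      obtain ⟨a, b, rfl⟩ := sym2_rep e
      have hmem : comp J a ∈ (fun v => comp J v) '' verts J := ⟨a, mem_verts_left he, rfl⟩
      have hpos : 0 < ncomps J := (Set.ncard_pos (Set.toFinite _)).mpr ⟨_, hmem⟩
      omega
    omega
  · -- the rank formula
    intro F hFE
    obtain ⟨S₀, hp₀, hval₀⟩ := exists_good_seq hFE
    obtain ⟨I₀, hI₀F, hI₀sp, hI₀card⟩ := exists_spanning_forest hFE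
    have hI₀ind : M.Indep I₀ := (hMI I₀).mpr ⟨hI₀F.trans hFE, fun J hJ hJne => hI₀sp J hJ hJne⟩
    set A := {k : ℕ | ∃ I ⊆ F, M.Indep I ∧ I.ncard = k} with hA
    set B := {v : ℤ | ∃ S, ProperSeq (triangleCopies n) S ∧ v = valSeq F S} with hB
    have hmrkA : mrk M F = sSup A := rfl
    have hvalB : valX (triangleCopies n) F = sInf B := rfl
    have hAI₀ : I₀.ncard ∈ A := ⟨I₀, hI₀F, hI₀ind, rfl⟩
    have hAbdd : BddAbove A := by
      refine ⟨F.ncard, ?_⟩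
      rintro k ⟨I, hIF, -, rfl⟩
      exact Set.ncard_le_ncard hIF (Set.toFinite _)
    have hBmem : valSeq F S₀ ∈ B := ⟨S₀, hp₀, rfl⟩
    have hAB : ∀ k ∈ A, ∀ v ∈ B, (k : ℤ) ≤ v := by
      rintro k ⟨I, hIF, hIind, rfl⟩ v ⟨S, hS, rfl⟩
      have hcircM : ∀ C ∈ S, M.IsCircuit' C := fun C hC => hcirc C (hS.1 C hC)
      have hb := rank_seq_lemma S hcircM hS.2 (F := F) (I := I)
        (by rw [hME]; exact hFE) (Set.toFinite _) hIind hIF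
      have hvS : valSeq F S = ((F ∪ unionList S).ncard : ℤ) - S.length := rfl
      rw [hvS]
      omega
    have hsupA : sSup A ∈ A := Nat.sSup_mem ⟨_, hAI₀⟩ hAbdd
    have hmrk_ge : I₀.ncard ≤ sSup A := le_csSup hAbdd hAI₀
    have hmrk_le : ((sSup A : ℕ) : ℤ) ≤ valSeq F S₀ := hAB _ hsupA _ hBmem
    have hIz : (I₀.ncard : ℤ) = ((verts F).ncard : ℤ) - ncomps F := by omega
    have hBval : valSeq F S₀ = (I₀.ncard : ℤ) := by rw [hval₀, hIz]
    have hlb : ∀ v ∈ B, (I₀.ncard : ℤ) ≤ v := fun v hv => hAB _ hAI₀ v hv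
    have hinf : sInf B = (I₀.ncard : ℤ) := by
      apply le_antisymm
      · exact csInf_le ⟨(I₀.ncard : ℤ), fun v hv => hlb v hv⟩ (hBval ▸ hBmem)
      · exact le_csInf ⟨_, hBmem⟩ hlb
    rw [hmrkA, hvalB, hinf]
    have hle2 : sSup A ≤ I₀.ncard := by
      have := hmrk_le
      rw [hBval] at this
      exact_mod_cast this
    have : sSup A = I₀.ncard := le_antisymm hle2 hmrk_ge
    exact_mod_cast congrArg Nat.cast this
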